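/- Under the billiard polygon setup, the sum of the values of the non-standard generating function over the orbit equals the perimeter: Σ_{i=1}^{n} 2·h(ψᵢ)·sin δᵢ = L. -/

import Mathlib

open Real

lemma trig_aux (hb hb' ha ha' θ da db a b : ℝ)
    (h1 : Real.sin (b - θ) = Real.sin db) (h2 : Real.cos (b - θ) = Real.cos db)
    (h3 : Real.sin (θ - a) = Real.sin da) (h4 : Real.cos (θ - a) = Real.cos da) :
    (-Real.sin θ) * ((hb * Real.cos b - hb' * Real.sin b) - (ha * Real.cos a - ha' * Real.sin a))
      + Real.cos θ * ((hb * Real.sin b + hb' * Real.cos b) - (ha * Real.sin a + ha' * Real.cos a))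
    = (hb * Real.sin db + hb' * Real.cos db) + (ha * Real.sin da - ha' * Real.cos da) := by
  rw [← h1, ← h2, ← h3, ← h4, Real.sin_sub, Real.cos_sub, Real.sin_sub, Real.cos_sub]
  ring

/-- For a billiard `n`-gon in a smooth convex curve with support function `h`,
the sum of the values of the non-standard generating function over the orbit
equals the perimeter: `∑ 2 h(ψᵢ) sin δᵢ = L`. -/
theorem stmt_2 (h : ℝ → ℝ) (hd : Differentiable ℝ h)
    (n : ℕ) (hn : 2 ≤ n)
    (φ ψ δ : ℕ → ℝ)
    (hφ : φ n = φ 0 + 2 * Real.pi)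
    (hψ : ∀ i ∈ Finset.Icc 1 n, ψ i = (φ (i - 1) + φ i) / 2)
    (hδ : ∀ i ∈ Finset.Icc 1 n, δ i = (φ i - φ (i - 1)) / 2)
    (M : ℕ → EuclideanSpace ℝ (Fin 2))
    (hM : ∀ i ∈ Finset.Icc 1 n, M i
        = h (ψ i) • (WithLp.toLp 2 ![Real.cos (ψ i), Real.sin (ψ i)] : EuclideanSpace ℝ (Fin 2))
        + deriv h (ψ i) • (WithLp.toLp 2 ![-Real.sin (ψ i), Real.cos (ψ i)] : EuclideanSpace ℝ (Fin 2)))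
    (hMwrap : M (n + 1) = M 1)
    (chord : ∀ i ∈ Finset.Icc 1 n, ∃ t : ℝ, 0 < t ∧
        M (i + 1) - M i = t • (WithLp.toLp 2 ![-Real.sin (φ i), Real.cos (φ i)] : EuclideanSpace ℝ (Fin 2)))
    (L : ℝ) (hL : L = ∑ i ∈ Finset.Icc 1 n, ‖M (i + 1) - M i‖) :
    ∑ i ∈ Finset.Icc 1 n, 2 * h (ψ i) * Real.sin (δ i) = L := by
  -- abbreviations
  set A : ℕ → ℝ := fun j => h (ψ j) * Real.sin (δ j) + deriv h (ψ j) * Real.cos (δ j) with hA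
  set B : ℕ → ℝ := fun j => h (ψ j) * Real.sin (δ j) - deriv h (ψ j) * Real.cos (δ j) with hB
  -- component formulas for M
  have comp : ∀ j ∈ Finset.Icc 1 n,
      (M j) 0 = h (ψ j) * Real.cos (ψ j) - deriv h (ψ j) * Real.sin (ψ j) ∧
      (M j) 1 = h (ψ j) * Real.sin (ψ j) + deriv h (ψ j) * Real.cos (ψ j) := by
    intro j hj
    rw [hM j hj]
    constructor <;>
      simp [PiLp.add_apply, PiLp.smul_apply, Matrix.cons_val_zero, Matrix.cons_val_one,
        Matrix.head_cons, smul_eq_mul] <;> ring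
  -- relations between angles
  have hpsi_phi : ∀ i ∈ Finset.Icc 1 n, ψ i = φ i - δ i := by
    intro i hi
    rw [hψ i hi, hδ i hi]; ring
  have key : ∀ i ∈ Finset.Icc 1 n,
      ‖M (i + 1) - M i‖ = A (if i = n then 1 else i + 1) + B i := by
    intro i hi
    simp only [Finset.mem_Icc] at hi
    obtain ⟨t, ht, hte⟩ := chord i (Finset.mem_Icc.2 hi)
    have e0 : (M (i + 1)) 0 - (M i) 0 = t * (-Real.sin (φ i)) := by
      have := congrArg (fun v => v (0 : Fin 2)) hte
      simpa [PiLp.sub_apply, PiLp.smul_apply, smul_eq_mul] using this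
    have e1 : (M (i + 1)) 1 - (M i) 1 = t * Real.cos (φ i) := by
      have := congrArg (fun v => v (1 : Fin 2)) hte
      simpa [PiLp.sub_apply, PiLp.smul_apply, smul_eq_mul] using this
    have hnorm : ‖M (i + 1) - M i‖ = t := by
      rw [EuclideanSpace.norm_eq, Fin.sum_univ_two]
      simp only [PiLp.sub_apply, Real.norm_eq_abs, sq_abs]
      rw [e0, e1]
      rw [show (t * -Real.sin (φ i)) ^ 2 + (t * Real.cos (φ i)) ^ 2 = t ^ 2 by
        nlinarith [Real.sin_sq_add_cos_sq (φ i)]]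
      exact Real.sqrt_sq ht.le
    have hteq : t = (-Real.sin (φ i)) * ((M (i + 1)) 0 - (M i) 0)
        + Real.cos (φ i) * ((M (i + 1)) 1 - (M i) 1) := by
      rw [e0, e1]
      linear_combination -t * (Real.sin_sq_add_cos_sq (φ i))
    obtain ⟨c0, c1⟩ := comp i (Finset.mem_Icc.2 hi)
    -- the "next" index
    by_cases hin : i = n
    · have h1mem : (1 : ℕ) ∈ Finset.Icc 1 n := Finset.mem_Icc.2 ⟨le_refl 1, hn.trans' (by norm_num)⟩
      obtain ⟨d0, d1⟩ := comp 1 h1mem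
      have hwrap : M (i + 1) = M 1 := by rw [hin, hMwrap]
      rw [hnorm, hteq, if_pos hin, hwrap, c0, c1, d0, d1]
      have h10 : (1 : ℕ) - 1 = 0 := rfl
      have hb : Real.sin (ψ 1 - φ i) = Real.sin (δ 1) ∧
          Real.cos (ψ 1 - φ i) = Real.cos (δ 1) := by
        have heq : ψ 1 - φ i = δ 1 - 2 * Real.pi := by
          rw [hψ 1 h1mem, hδ 1 h1mem, h10, hin, hφ]; ring
        constructor
        · rw [heq, Real.sin_sub_two_pi]
        · rw [heq, Real.cos_sub_two_pi]
      have ha : Real.sin (φ i - ψ i) = Real.sin (δ i) ∧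
          Real.cos (φ i - ψ i) = Real.cos (δ i) := by
        have heq : φ i - ψ i = δ i := by
          rw [hpsi_phi i (Finset.mem_Icc.2 hi)]; ring
        rw [heq]; exact ⟨rfl, rfl⟩
      exact trig_aux _ _ _ _ _ _ _ _ _ hb.1 hb.2 ha.1 ha.2
    · have hi1 : i + 1 ∈ Finset.Icc 1 n :=
        Finset.mem_Icc.2 ⟨Nat.le_add_right 1 i |>.trans (by omega), by omega⟩
      obtain ⟨d0, d1⟩ := comp (i + 1) hi1
      rw [hnorm, hteq, if_neg hin, c0, c1, d0, d1]
      have hb : Real.sin (ψ (i + 1) - φ i) = Real.sin (δ (i + 1)) ∧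
          Real.cos (ψ (i + 1) - φ i) = Real.cos (δ (i + 1)) := by
        have : ψ (i + 1) - φ i = δ (i + 1) := by
          have := hpsi_phi (i + 1) hi1
          have h2 : (i + 1 : ℕ) - 1 = i := by omega
          rw [hψ (i + 1) hi1, hδ (i + 1) hi1, h2]; ring
        rw [this]; exact ⟨rfl, rfl⟩
      have ha : Real.sin (φ i - ψ i) = Real.sin (δ i) ∧
          Real.cos (φ i - ψ i) = Real.cos (δ i) := by
        have : φ i - ψ i = δ i := by
          rw [hpsi_phi i (Finset.mem_Icc.2 hi)]; ring
        rw [this]; exact ⟨rfl, rfl⟩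
      exact trig_aux _ _ _ _ _ _ _ _ _ hb.1 hb.2 ha.1 ha.2
  rw [hL, Finset.sum_congr rfl key, Finset.sum_add_distrib]
  have hshift : ∑ i ∈ Finset.Icc 1 n, A (if i = n then 1 else i + 1)
      = ∑ i ∈ Finset.Icc 1 n, A i := by
    apply Finset.sum_nbij' (i := fun i => if i = n then 1 else i + 1)
      (j := fun j => if j = 1 then n else j - 1)
    · intro a ha; simp only [Finset.mem_Icc] at ha ⊢; split <;> omega
    · intro a ha; simp only [Finset.mem_Icc] at ha ⊢; split <;> omega
    · intro a ha; simp only [Finset.mem_Icc] at ha; split <;> split <;> omega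
    · intro a ha; simp only [Finset.mem_Icc] at ha; split <;> split <;> omega
    · intro a _; rfl
  rw [hshift, ← Finset.sum_add_distrib]
  apply Finset.sum_congr rfl
  intro i _
  simp only [hA, hB]
  ring
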